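/- Let s ≥ 1 and r ≥ 2s−1 be integers, and let σ_0,…,σ_{r−1} be real numbers satisfying j Σ_{v=0}^{r−1} σ_v (r−v)^{j−1} = r^j − (−1)^j β_j for every j = 1,…,2s−1. Then for every integer n ≥ 2r and every real polynomial p of degree at most 2s−1, the trapezoid rule with end corrections is exact: I_n(p) = ∫_0^1 p(x) dx. -/

import Mathlib

open Finset

lemma trap_faulhaber (m k : ℕ) : ∑ v ∈ range m, (v:ℝ)^k
    = ∑ i ∈ range (k+1), ((bernoulli i : ℚ):ℝ) * ((k+1).choose i) * (m:ℝ)^(k+1-i) / ((k:ℝ)+1) := by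
  have h := congrArg (fun q : ℚ => (q:ℝ)) (sum_range_pow m k)
  push_cast at h
  convert h using 2

lemma trap_alt (k : ℕ) : ∑ j ∈ range (k+1), (-1:ℝ)^j * ((k+1).choose (j+1) : ℝ) = 1 := by
  have h := Int.alternating_sum_range_choose_of_ne (Nat.succ_ne_zero k)
  have h' : ∑ i ∈ range (k+1+1), (-1:ℝ)^i * ((k+1).choose i : ℝ) = 0 := by
    exact_mod_cast congrArg (fun z : ℤ => (z:ℝ)) h
  rw [Finset.sum_range_succ'] at h'
  simp only [pow_zero, one_mul, Nat.choose_zero_right, Nat.cast_one] at h'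
  have e : ∑ i ∈ range (k+1), (-1:ℝ)^(i+1) * ((k+1).choose (i+1) : ℝ)
      = - ∑ j ∈ range (k+1), (-1:ℝ)^j * ((k+1).choose (j+1) : ℝ) := by
    rw [← Finset.sum_neg_distrib]
    exact sum_congr rfl fun j _ => by ring
  rw [e] at h'
  linarith

lemma trap_choose_div (k j : ℕ) : (k.choose j : ℝ)/((j:ℝ)+1) = ((k+1).choose (j+1) : ℝ)/((k:ℝ)+1) := by
  have hc : ((k:ℝ)+1) * (k.choose j : ℝ) = ((k+1).choose (j+1) : ℝ) * ((j:ℝ)+1) := by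
    exact_mod_cast congrArg (fun z : ℕ => (z:ℝ)) (Nat.add_one_mul_choose_eq k j)
  rw [div_eq_div_iff (by positivity) (by positivity)]
  linear_combination hc

lemma trap_bodd (m : ℕ) (h : Odd m) (h1 : 1 < m) : (bernoulli m : ℚ) = 0 := by
  rw [bernoulli_eq_bernoulli'_of_ne_one (by omega)]
  exact bernoulli'_eq_zero_of_odd h h1

lemma trap_sum1 (k : ℕ) (a : ℝ) :
    ∑ j ∈ range (k+1), (k.choose j : ℝ)/((j:ℝ)+1) * ((-1)^j * (a^(k-j) * a^(j+1)))
      = a^(k+1)/((k:ℝ)+1) := by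
  have h : ∀ j ∈ range (k+1), (k.choose j : ℝ)/((j:ℝ)+1) * ((-1)^j * (a^(k-j) * a^(j+1)))
      = a^(k+1)/((k:ℝ)+1) * ((-1:ℝ)^j * ((k+1).choose (j+1) : ℝ)) := by
    intro j hj
    rw [mem_range] at hj
    have hpow : a^(k-j) * a^(j+1) = a^(k+1) := by rw [← pow_add]; congr 1; omega
    rw [hpow, trap_choose_div]
    ring
  rw [sum_congr rfl h, ← Finset.mul_sum, trap_alt, mul_one]

lemma trap_sum2 (k : ℕ) (a b : ℝ) :
    ∑ j ∈ range (k+1), (k.choose j : ℝ)/((j:ℝ)+1) * (b^(k-j) * a^(j+1))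
      = ((a+b)^(k+1) - b^(k+1))/((k:ℝ)+1) := by
  have hadd : (a+b)^(k+1) = ∑ m ∈ range (k+1+1), a^m * b^(k+1-m) * ((k+1).choose m : ℝ) := add_pow a b (k+1)
  rw [Finset.sum_range_succ'] at hadd
  simp only [pow_zero, one_mul, Nat.choose_zero_right, Nat.cast_one, Nat.succ_sub_succ_eq_sub, Nat.sub_zero, mul_one] at hadd
  have h : ∀ j ∈ range (k+1), (k.choose j : ℝ)/((j:ℝ)+1) * (b^(k-j) * a^(j+1))
      = (1/((k:ℝ)+1)) * (a^(j+1) * b^(k-j) * ((k+1).choose (j+1) : ℝ)) := by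
    intro j hj
    linear_combination (b^(k-j) * a^(j+1)) * trap_choose_div k j
  rw [sum_congr rfl h, ← Finset.mul_sum]
  rw [show ∑ x ∈ range (k+1), a^(x+1) * b^(k-x) * ((k+1).choose (x+1):ℝ) = (a+b)^(k+1) - b^(k+1) by linarith [hadd]]
  ring

lemma trap_inner (k a : ℕ) :
    ∑ j ∈ range (k+1), ((bernoulli (j+1):ℚ):ℝ) * ((k+1).choose (j+1) : ℝ) * (a:ℝ)^(k-j)
      = ((k:ℝ)+1) * (∑ v ∈ range a, (v:ℝ)^k) + ((bernoulli (k+1):ℚ):ℝ) - (a:ℝ)^(k+1) := by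
  have hF := trap_faulhaber a k
  have hF' : ∑ i ∈ range (k+1), ((bernoulli i:ℚ):ℝ) * ((k+1).choose i : ℝ) * (a:ℝ)^(k+1-i)
      = ((k:ℝ)+1) * ∑ v ∈ range a, (v:ℝ)^k := by
    rw [hF, ← sum_div, mul_div_cancel₀]
    positivity
  have hG1 : ∑ i ∈ range (k+1+1), ((bernoulli i:ℚ):ℝ) * ((k+1).choose i : ℝ) * (a:ℝ)^(k+1-i)
      = (∑ i ∈ range (k+1), ((bernoulli i:ℚ):ℝ) * ((k+1).choose i : ℝ) * (a:ℝ)^(k+1-i))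
        + ((bernoulli (k+1):ℚ):ℝ) := by
    rw [Finset.sum_range_succ]; simp
  have hG2 : ∑ i ∈ range (k+1+1), ((bernoulli i:ℚ):ℝ) * ((k+1).choose i : ℝ) * (a:ℝ)^(k+1-i)
      = (∑ j ∈ range (k+1), ((bernoulli (j+1):ℚ):ℝ) * ((k+1).choose (j+1) : ℝ) * (a:ℝ)^(k-j))
        + (a:ℝ)^(k+1) := by
    rw [Finset.sum_range_succ']; simp [Nat.succ_sub_succ_eq_sub]
  linarith [hF', hG1, hG2]

lemma trap_sum3 (k a : ℕ) :
    ∑ j ∈ range (k+1), (k.choose j : ℝ)/((j:ℝ)+1) * ((a:ℝ)^(k-j) * ((bernoulli (j+1) : ℚ):ℝ))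
      = (∑ v ∈ range a, (v:ℝ)^k) + (((bernoulli (k+1) : ℚ):ℝ) - (a:ℝ)^(k+1))/((k:ℝ)+1) := by
  have hstep : ∑ j ∈ range (k+1), (k.choose j : ℝ)/((j:ℝ)+1) * ((a:ℝ)^(k-j) * ((bernoulli (j+1) : ℚ):ℝ))
      = (1/((k:ℝ)+1)) * ∑ j ∈ range (k+1), ((bernoulli (j+1):ℚ):ℝ) * ((k+1).choose (j+1) : ℝ) * (a:ℝ)^(k-j) := by
    rw [Finset.mul_sum]
    refine sum_congr rfl fun j hj => ?_
    linear_combination ((a:ℝ)^(k-j) * ((bernoulli (j+1):ℚ):ℝ)) * trap_choose_div k j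
  rw [hstep, trap_inner]
  field_simp
  ring

lemma trap_sum4 (k b : ℕ) :
    ∑ j ∈ range (k+1), (k.choose j : ℝ)/((j:ℝ)+1) * ((-1)^j * ((b:ℝ)^(k-j) * ((bernoulli (j+1) : ℚ):ℝ)))
      = -(∑ v ∈ range (b+1), (v:ℝ)^k) + ((b:ℝ)^(k+1) - ((bernoulli (k+1) : ℚ):ℝ))/((k:ℝ)+1) := by
  have hbn : ∀ j : ℕ, (-1:ℝ)^(j+1) * ((bernoulli (j+1):ℚ):ℝ)
      = ((bernoulli (j+1):ℚ):ℝ) + (if j = 0 then 1 else 0) := by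
    intro j
    match j with
    | 0 => norm_num [bernoulli_one]
    | Nat.succ i =>
      simp only [Nat.succ_ne_zero, if_false, add_zero]
      rcases Nat.even_or_odd (i+1+1) with he | ho
      · rw [he.neg_one_pow, one_mul]
      · rw [trap_bodd _ ho (by omega)]; simp
  have hstep : ∑ j ∈ range (k+1), (k.choose j : ℝ)/((j:ℝ)+1) * ((-1)^j * ((b:ℝ)^(k-j) * ((bernoulli (j+1) : ℚ):ℝ)))
      = (-(1/((k:ℝ)+1))) * ∑ j ∈ range (k+1), ((-1:ℝ)^(j+1) * ((bernoulli (j+1):ℚ):ℝ)) * (((k+1).choose (j+1) : ℝ) * (b:ℝ)^(k-j)) := by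
    rw [Finset.mul_sum]
    refine sum_congr rfl fun j hj => ?_
    have h := trap_choose_div k j
    have : (-1:ℝ)^(j+1) = -(-1:ℝ)^j := by rw [pow_succ]; ring
    rw [this]
    linear_combination ((-1:ℝ)^j * (b:ℝ)^(k-j) * ((bernoulli (j+1):ℚ):ℝ)) * h
  rw [hstep]
  have hsplit : ∑ j ∈ range (k+1), ((-1:ℝ)^(j+1) * ((bernoulli (j+1):ℚ):ℝ)) * (((k+1).choose (j+1) : ℝ) * (b:ℝ)^(k-j))
      = (∑ j ∈ range (k+1), ((bernoulli (j+1):ℚ):ℝ) * ((k+1).choose (j+1) : ℝ) * (b:ℝ)^(k-j))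
        + ((k:ℝ)+1) * (b:ℝ)^k := by
    have : ∀ j ∈ range (k+1), ((-1:ℝ)^(j+1) * ((bernoulli (j+1):ℚ):ℝ)) * (((k+1).choose (j+1) : ℝ) * (b:ℝ)^(k-j))
        = ((bernoulli (j+1):ℚ):ℝ) * ((k+1).choose (j+1) : ℝ) * (b:ℝ)^(k-j)
          + (if j = 0 then ((k+1).choose (j+1) : ℝ) * (b:ℝ)^(k-j) else 0) := by
      intro j hj
      rw [hbn j]
      by_cases h0 : j = 0 <;> simp [h0] <;> ring
    rw [sum_congr rfl this, Finset.sum_add_distrib, Finset.sum_ite_eq' (range (k+1)) 0]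
    simp
  rw [hsplit, trap_inner, Finset.sum_range_succ]
  field_simp
  ring

lemma trap_master (k r m : ℕ) :
    (∑ j ∈ range (k+1), (k.choose j : ℝ) * ((-1)^j * (r:ℝ)^(k-j) + (m:ℝ)^(k-j)) *
      (((r:ℝ)^(j+1) - (-1:ℝ)^(j+1) * ((bernoulli (j+1) : ℚ):ℝ)) / ((j:ℝ)+1)))
    + ((∑ v ∈ range (m+1), (v:ℝ)^k) - ∑ v ∈ range r, (v:ℝ)^k)
    = ((r:ℝ)+(m:ℝ))^(k+1) / ((k:ℝ)+1) := by
  have hterm : ∀ j ∈ range (k+1),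
      (k.choose j : ℝ) * ((-1)^j * (r:ℝ)^(k-j) + (m:ℝ)^(k-j)) *
        (((r:ℝ)^(j+1) - (-1:ℝ)^(j+1) * ((bernoulli (j+1) : ℚ):ℝ)) / ((j:ℝ)+1))
      = (k.choose j : ℝ)/((j:ℝ)+1) * ((-1)^j * ((r:ℝ)^(k-j) * (r:ℝ)^(j+1)))
        + ((k.choose j : ℝ)/((j:ℝ)+1) * ((m:ℝ)^(k-j) * (r:ℝ)^(j+1))
        + ((k.choose j : ℝ)/((j:ℝ)+1) * ((r:ℝ)^(k-j) * ((bernoulli (j+1) : ℚ):ℝ))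
        + (k.choose j : ℝ)/((j:ℝ)+1) * ((-1)^j * ((m:ℝ)^(k-j) * ((bernoulli (j+1) : ℚ):ℝ))))) := by
    intro j _
    have h2 : (-1:ℝ)^j * (-1:ℝ)^j = 1 := by rw [← mul_pow]; norm_num
    rw [pow_succ (-1:ℝ) j]
    linear_combination ((k.choose j : ℝ)/((j:ℝ)+1) * (r:ℝ)^(k-j) * ((bernoulli (j+1):ℚ):ℝ)) * h2
  rw [sum_congr rfl hterm, Finset.sum_add_distrib, Finset.sum_add_distrib, Finset.sum_add_distrib,
      trap_sum1, trap_sum2, trap_sum3, trap_sum4]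
  ring

lemma trap_key (s r : ℕ) (hs : 1 ≤ s) (hr : 2*s-1 ≤ r) (σ : ℕ → ℝ)
    (hσ : ∀ j : ℕ, 1 ≤ j → j ≤ 2*s-1 →
      (j : ℝ) * ∑ v ∈ range r, σ v * ((r - v : ℕ) : ℝ) ^ (j - 1) =
        (r : ℝ) ^ j - (-1 : ℝ) ^ j * (bernoulli j : ℝ))
    (n : ℕ) (hn : 2*r ≤ n) (k : ℕ) (hk : k ≤ 2*s-1) :
    (∑ v ∈ range r, σ v * (v:ℝ)^k) + (∑ v ∈ Icc r (n-r), (v:ℝ)^k)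
      + (∑ v ∈ range r, σ v * ((n-v:ℕ):ℝ)^k) = (n:ℝ)^(k+1)/((k:ℝ)+1) := by
  have hrn : r ≤ n - r := by omega
  have hrn' : r ≤ n := by omega
  -- middle sum
  have hmid : ∑ v ∈ Icc r (n-r), (v:ℝ)^k
      = (∑ v ∈ range ((n-r)+1), (v:ℝ)^k) - ∑ v ∈ range r, (v:ℝ)^k := by
    rw [← Finset.sum_Ico_eq_sub (fun v => (v:ℝ)^k) (by omega : r ≤ (n-r)+1),
      Finset.Ico_add_one_right_eq_Icc]
  -- left tail
  have hL : ∑ v ∈ range r, σ v * (v:ℝ)^k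
      = ∑ j ∈ range (k+1), ((k.choose j : ℝ) * ((-1)^j * (r:ℝ)^(k-j)))
          * (∑ v ∈ range r, σ v * ((r-v:ℕ):ℝ)^j) := by
    have h1 : ∀ v ∈ range r, σ v * (v:ℝ)^k
        = ∑ j ∈ range (k+1), ((k.choose j : ℝ) * ((-1)^j * (r:ℝ)^(k-j))) * (σ v * ((r-v:ℕ):ℝ)^j) := by
      intro v hv
      rw [mem_range] at hv
      have hc : ((r-v:ℕ):ℝ) = (r:ℝ) - (v:ℝ) := by
        push_cast [Nat.cast_sub hv.le]; ring
      have he : (v:ℝ)^k = (-((r-v:ℕ):ℝ) + (r:ℝ))^k := by rw [hc]; ring_nf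
      rw [he, add_pow, Finset.mul_sum]
      refine sum_congr rfl fun j hj => ?_
      rw [neg_pow]
      ring
    rw [sum_congr rfl h1, Finset.sum_comm]
    refine sum_congr rfl fun j _ => ?_
    rw [Finset.mul_sum]
  -- right tail
  have hR : ∑ v ∈ range r, σ v * ((n-v:ℕ):ℝ)^k
      = ∑ j ∈ range (k+1), ((k.choose j : ℝ) * (((n-r:ℕ)):ℝ)^(k-j))
          * (∑ v ∈ range r, σ v * ((r-v:ℕ):ℝ)^j) := by
    have h1 : ∀ v ∈ range r, σ v * ((n-v:ℕ):ℝ)^k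
        = ∑ j ∈ range (k+1), ((k.choose j : ℝ) * (((n-r:ℕ)):ℝ)^(k-j)) * (σ v * ((r-v:ℕ):ℝ)^j) := by
      intro v hv
      rw [mem_range] at hv
      have hc : ((n-v:ℕ):ℝ) = ((r-v:ℕ):ℝ) + ((n-r:ℕ):ℝ) := by
        have : n - v = (r-v) + (n-r) := by omega
        rw [this]; push_cast; ring
      rw [hc, add_pow, Finset.mul_sum]
      refine sum_congr rfl fun j hj => ?_
      ring
    rw [sum_congr rfl h1, Finset.sum_comm]
    refine sum_congr rfl fun j _ => ?_
    rw [Finset.mul_sum]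
  rw [hmid, hL, hR]
  -- combine the two tails into one sum
  have hcomb : ∑ j ∈ range (k+1), ((k.choose j : ℝ) * ((-1)^j * (r:ℝ)^(k-j)))
          * (∑ v ∈ range r, σ v * ((r-v:ℕ):ℝ)^j)
      + ∑ j ∈ range (k+1), ((k.choose j : ℝ) * (((n-r:ℕ)):ℝ)^(k-j))
          * (∑ v ∈ range r, σ v * ((r-v:ℕ):ℝ)^j)
      = ∑ j ∈ range (k+1), (k.choose j : ℝ) * ((-1)^j * (r:ℝ)^(k-j) + ((n-r:ℕ):ℝ)^(k-j))
          * (((r:ℝ)^(j+1) - (-1:ℝ)^(j+1) * ((bernoulli (j+1) : ℚ):ℝ)) / ((j:ℝ)+1)) := by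
    rw [← Finset.sum_add_distrib]
    refine sum_congr rfl fun j hj => ?_
    rw [mem_range] at hj
    by_cases hcase : j + 1 ≤ 2*s-1
    · have h := hσ (j+1) (by omega) hcase
      simp only [Nat.add_sub_cancel] at h
      push_cast at h
      have hj1 : ((j:ℝ)+1) ≠ 0 := by positivity
      have hτ : ∑ v ∈ range r, σ v * ((r-v:ℕ):ℝ)^j
          = ((r:ℝ)^(j+1) - (-1:ℝ)^(j+1) * ((bernoulli (j+1) : ℚ):ℝ)) / ((j:ℝ)+1) := by
        rw [eq_div_iff hj1]
        linear_combination h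
      rw [hτ]; ring
    · -- j = k = 2*s-1, odd
      have hj2 : j = 2*s-1 := by omega
      have hjk : j = k := by omega
      have hodd : Odd j := by refine ⟨s-1, by omega⟩
      have h1 : (-1:ℝ)^j = -1 := hodd.neg_one_pow
      have h2 : k - j = 0 := by omega
      rw [h1, h2]
      norm_num
  have hnn : (r:ℝ) + ((n-r:ℕ):ℝ) = (n:ℝ) := by push_cast [Nat.cast_sub hrn']; ring
  have hm := trap_master k r (n-r)
  rw [hnn] at hm
  linarith [hcomb, hm]

/-- if the boundary weights `σ_0, …, σ_{r-1}` satisfy the accuracy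
conditions for `j = 1, …, 2s−1`, then the trapezoid rule with end corrections is
exact on every polynomial of degree at most `2s−1`, for every `n ≥ 2r`. -/
theorem trapezoid_end_corrections_exact_polynomials (s r : ℕ) (hs : 1 ≤ s)
    (hr : 2 * s - 1 ≤ r) (σ : ℕ → ℝ)
    (hσ : ∀ j : ℕ, 1 ≤ j → j ≤ 2 * s - 1 →
      (j : ℝ) * ∑ v ∈ Finset.range r, σ v * ((r - v : ℕ) : ℝ) ^ (j - 1) =
        (r : ℝ) ^ j - (-1 : ℝ) ^ j * (bernoulli j : ℝ)) :
    ∀ n : ℕ, 2 * r ≤ n → ∀ p : Polynomial ℝ, p.natDegree ≤ 2 * s - 1 →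
      (1 / (n : ℝ)) *
          ((∑ v ∈ Finset.range r, σ v * p.eval ((v : ℝ) / (n : ℝ))) +
           (∑ v ∈ Finset.Icc r (n - r), p.eval ((v : ℝ) / (n : ℝ))) +
           ∑ v ∈ Finset.range r, σ v * p.eval (((n - v : ℕ) : ℝ) / (n : ℝ))) =
        ∫ x in (0 : ℝ)..1, p.eval x := by
  intro n hn p hp
  have hn1 : 1 ≤ n := by omega
  have hn0 : ((n:ℝ)) ≠ 0 := by positivity
  have hdeg : p.natDegree < 2*s := by omega
  -- the integral
  have hint : ∫ x in (0:ℝ)..1, p.eval x = ∑ k ∈ range (2*s), p.coeff k * (1/((k:ℝ)+1)) := by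
    calc ∫ x in (0:ℝ)..1, p.eval x
        = ∫ x in (0:ℝ)..1, ∑ k ∈ range (2*s), p.coeff k * x^k := by
          apply intervalIntegral.integral_congr
          intro x _
          exact Polynomial.eval_eq_sum_range' hdeg x
      _ = ∑ k ∈ range (2*s), ∫ x in (0:ℝ)..1, p.coeff k * x^k :=
          intervalIntegral.integral_finset_sum
            (fun k _ => ((continuous_const.mul (continuous_pow k)).intervalIntegrable 0 1))
      _ = ∑ k ∈ range (2*s), p.coeff k * (1/((k:ℝ)+1)) := by
          refine sum_congr rfl fun k _ => ?_
          rw [intervalIntegral.integral_const_mul, integral_pow]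
          norm_num
  -- per-monomial divided identity
  have hmono : ∀ k, k < 2*s →
      (∑ v ∈ range r, σ v * ((v:ℝ)/(n:ℝ))^k) + (∑ v ∈ Icc r (n-r), ((v:ℝ)/(n:ℝ))^k)
        + (∑ v ∈ range r, σ v * (((n-v:ℕ):ℝ)/(n:ℝ))^k) = (n:ℝ) * (1/((k:ℝ)+1)) := by
    intro k hk
    have hkey := trap_key s r hs hr σ hσ n hn k (by omega)
    have hnk : ((n:ℝ))^k ≠ 0 := by positivity
    have e1 : ∀ x:ℝ, (x/(n:ℝ))^k = x^k / (n:ℝ)^k := fun x => div_pow x _ k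
    simp only [e1]
    have eA : ∑ v ∈ range r, σ v * ((v:ℝ)^k/(n:ℝ)^k) = (∑ v ∈ range r, σ v * (v:ℝ)^k)/(n:ℝ)^k := by
      rw [sum_div]; exact sum_congr rfl fun v _ => by ring
    have eB : ∑ v ∈ Icc r (n-r), ((v:ℝ)^k/(n:ℝ)^k) = (∑ v ∈ Icc r (n-r), (v:ℝ)^k)/(n:ℝ)^k := by
      rw [sum_div]
    have eC : ∑ v ∈ range r, σ v * (((n-v:ℕ):ℝ)^k/(n:ℝ)^k)
        = (∑ v ∈ range r, σ v * ((n-v:ℕ):ℝ)^k)/(n:ℝ)^k := by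
      rw [sum_div]; exact sum_congr rfl fun v _ => by ring
    rw [eA, eB, eC, ← add_div, ← add_div, hkey]
    rw [div_div, pow_succ]
    have hk1 : ((k:ℝ)+1) ≠ 0 := by positivity
    field_simp
  -- rewrite evaluations
  rw [hint]
  simp only [Polynomial.eval_eq_sum_range' hdeg]
  have hA : ∑ v ∈ range r, σ v * ∑ k ∈ range (2*s), p.coeff k * ((v:ℝ)/(n:ℝ))^k
      = ∑ k ∈ range (2*s), p.coeff k * ∑ v ∈ range r, σ v * ((v:ℝ)/(n:ℝ))^k := by
    simp_rw [Finset.mul_sum]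
    rw [Finset.sum_comm]
    exact sum_congr rfl fun k _ => sum_congr rfl fun v _ => by ring
  have hB : ∑ v ∈ Icc r (n-r), ∑ k ∈ range (2*s), p.coeff k * ((v:ℝ)/(n:ℝ))^k
      = ∑ k ∈ range (2*s), p.coeff k * ∑ v ∈ Icc r (n-r), ((v:ℝ)/(n:ℝ))^k := by
    rw [Finset.sum_comm]
    exact sum_congr rfl fun k _ => by rw [Finset.mul_sum]
  have hC : ∑ v ∈ range r, σ v * ∑ k ∈ range (2*s), p.coeff k * (((n-v:ℕ):ℝ)/(n:ℝ))^k
      = ∑ k ∈ range (2*s), p.coeff k * ∑ v ∈ range r, σ v * (((n-v:ℕ):ℝ)/(n:ℝ))^k := by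
    simp_rw [Finset.mul_sum]
    rw [Finset.sum_comm]
    exact sum_congr rfl fun k _ => sum_congr rfl fun v _ => by ring
  rw [hA, hB, hC, ← Finset.sum_add_distrib, ← Finset.sum_add_distrib, Finset.mul_sum]
  refine sum_congr rfl fun k hk => ?_
  rw [mem_range] at hk
  have h := hmono k hk
  calc (1/(n:ℝ)) * (p.coeff k * ∑ v ∈ range r, σ v * ((v:ℝ)/(n:ℝ))^k
        + p.coeff k * ∑ v ∈ Icc r (n-r), ((v:ℝ)/(n:ℝ))^k
        + p.coeff k * ∑ v ∈ range r, σ v * (((n-v:ℕ):ℝ)/(n:ℝ))^k)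
      = (1/(n:ℝ)) * (p.coeff k * (((∑ v ∈ range r, σ v * ((v:ℝ)/(n:ℝ))^k)
          + (∑ v ∈ Icc r (n-r), ((v:ℝ)/(n:ℝ))^k)
          + (∑ v ∈ range r, σ v * (((n-v:ℕ):ℝ)/(n:ℝ))^k)))) := by ring
    _ = (1/(n:ℝ)) * (p.coeff k * ((n:ℝ) * (1/((k:ℝ)+1)))) := by rw [h]
    _ = p.coeff k * (1/((k:ℝ)+1)) := by field_simp
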